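/- Let X, Y be finite sets with |X| = ℓ ≥ 2, |Y| = n ≥ 2, and let ℐ_⊥ = {A × B : A ⊆ X, B ⊆ Y} be the family of rectangles. Then DD(ℐ_⊥) = CD(ℐ_⊥) = (2^ℓ − ℓ − 1)(2^n − n − 1) + ℓ + n and DDd(ℐ_⊥) = (2^ℓ − ℓ − 1)(2^n − n − 1) + 1. -/

import Mathlib

open Set

/-- A family of sets is convex if it is closed under set-theoretic betweenness. -/
def IsConvexFam {X : Type*} (𝒜 : Set (Set X)) : Prop :=
  ∀ S ∈ 𝒜, ∀ T ∈ 𝒜, ∀ C : Set X, S ⊆ C → C ⊆ T → C ∈ 𝒜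

/-- A family is dominated if its union belongs to it. -/
def IsDominatedFam {X : Type*} (𝒜 : Set (Set X)) : Prop := ⋃₀ 𝒜 ∈ 𝒜

/-- A family is supported if it is nonempty and its intersection belongs to it. -/
def IsSupportedFam {X : Type*} (𝒜 : Set (Set X)) : Prop := 𝒜.Nonempty ∧ ⋂₀ 𝒜 ∈ 𝒜

/-- A family is an interval if it equals `[A,B] = {C | A ⊆ C ⊆ B}` for some `A ⊆ B`. -/
def IsIntervalFam {X : Type*} (𝒜 : Set (Set X)) : Prop :=
  ∃ A B : Set X, A ⊆ B ∧ 𝒜 = Set.Icc A B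

/-- `𝒢` dominates `𝒜` if there are dominated convex families `𝒟 G ⊆ 𝒜` (`G ∈ 𝒢`)
with `⋃ G ∈ 𝒢, 𝒟 G = 𝒜` and `⋃₀ (𝒟 G) = G`. -/
def DominatesFam {X : Type*} (𝒢 𝒜 : Set (Set X)) : Prop :=
  𝒢 ⊆ 𝒜 ∧ ∃ 𝒟 : Set X → Set (Set X),
    (∀ G ∈ 𝒢, 𝒟 G ⊆ 𝒜 ∧ IsConvexFam (𝒟 G) ∧ IsDominatedFam (𝒟 G) ∧ ⋃₀ (𝒟 G) = G) ∧
    (⋃ G ∈ 𝒢, 𝒟 G) = 𝒜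

/-- `𝒦` supports `𝒜` if there are supported convex families `𝒮 K ⊆ 𝒜` (`K ∈ 𝒦`)
with `⋃ K ∈ 𝒦, 𝒮 K = 𝒜` and `⋂₀ (𝒮 K) = K`. -/
def SupportsFam {X : Type*} (𝒦 𝒜 : Set (Set X)) : Prop :=
  𝒦 ⊆ 𝒜 ∧ ∃ 𝒮 : Set X → Set (Set X),
    (∀ K ∈ 𝒦, 𝒮 K ⊆ 𝒜 ∧ IsConvexFam (𝒮 K) ∧ IsSupportedFam (𝒮 K) ∧ ⋂₀ (𝒮 K) = K) ∧
    (⋃ K ∈ 𝒦, 𝒮 K) = 𝒜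

/-- The upper dimension: the minimal cardinality of a dominating subfamily. -/
noncomputable def upperDim {X : Type*} (𝒜 : Set (Set X)) : ℕ∞ :=
  sInf {n : ℕ∞ | ∃ 𝒢 : Set (Set X), DominatesFam 𝒢 𝒜 ∧ 𝒢.encard = n}

/-- The dual upper dimension: the minimal cardinality of a supporting subfamily. -/
noncomputable def dualDim {X : Type*} (𝒜 : Set (Set X)) : ℕ∞ :=
  sInf {n : ℕ∞ | ∃ 𝒦 : Set (Set X), SupportsFam 𝒦 𝒜 ∧ 𝒦.encard = n}

/-- The cylindrical dimension: the minimal number of intervals whose union is `𝒜`. -/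
noncomputable def cylDim {X : Type*} (𝒜 : Set (Set X)) : ℕ∞ :=
  sInf {n : ℕ∞ | ∃ 𝕀 : Set (Set (Set X)),
    (∀ J ∈ 𝕀, IsIntervalFam J) ∧ ⋃₀ 𝕀 = 𝒜 ∧ 𝕀.encard = n}

open Classical in
noncomputable def chiFun {X : Type*} (A : Set X) (x : X) : Bool := decide (x ∈ A)

/-- The set-theoretic operation corresponding to a binary operation on `{0,1}`. -/
noncomputable def setOp {X : Type*} (op : Bool → Bool → Bool) (A B : Set X) : Set X :=
  {x | op (chiFun A x) (chiFun B x) = true}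

/-- The tensor operation on families corresponding to a binary operation on `{0,1}`. -/
noncomputable def tensorFam {X : Type*} (op : Bool → Bool → Bool)
    (𝒜 ℬ : Set (Set X)) : Set (Set X) :=
  Set.image2 (setOp op) 𝒜 ℬ

/-- The convex shadow of `A` in `𝒜`. -/
def convexShadow {X : Type*} (𝒜 : Set (Set X)) (A : Set X) : Set (Set X) :=
  {B | B ⊆ A ∧ Set.Icc B A ⊆ 𝒜}

/-- Domain of a relation. -/
def relDom {X Y : Type*} (R : Set (X × Y)) : Set X := {x | ∃ y, (x, y) ∈ R}

/-- Range of a relation. -/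
def relRg {X Y : Type*} (R : Set (X × Y)) : Set Y := {y | ∃ x, (x, y) ∈ R}

/-- The family of (partial) functions from `X` to `Y`, as sets of pairs. -/
def partialFunFam (X Y : Type*) : Set (Set (X × Y)) :=
  {f | ∀ x y y', (x, y) ∈ f → (x, y') ∈ f → y = y'}

/-- The family of relations on `X` with disjoint domain and range. -/
def exclFam (X : Type*) : Set (Set (X × X)) :=
  {R | relDom R ∩ relRg R = ∅}

/-- The family of relations on `X` whose domain is included in their range. -/
def inclFam (X : Type*) : Set (Set (X × X)) :=
  {R | relDom R ⊆ relRg R}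

/-- The family of anonymous relations: every point of the domain has two distinct images. -/
def anonFam (X Y : Type*) : Set (Set (X × Y)) :=
  {R | ∀ x ∈ relDom R, ∃ y y' : Y, y ≠ y' ∧ (x, y) ∈ R ∧ (x, y') ∈ R}

/-- The family of rectangles `A × B`. -/
def rectFam (X Y : Type*) : Set (Set (X × Y)) :=
  {P | ∃ (A : Set X) (B : Set Y), P = A ×ˢ B}

/-- General tensor disjunction of an indexed family of families of sets. -/
def gTensorDisj {ι X : Type*} (𝒜 : ι → Set (Set X)) : Set (Set X) :=
  {U | ∃ f : ι → Set X, (∀ i, f i ∈ 𝒜 i) ∧ U = ⋃ i, f i}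

/-- The Kripke operator associated to a relation `ℛ ⊆ 𝒫(Y) × 𝒫(X)^n`. -/
def kripkeOp {X Y : Type*} {n : ℕ} (ℛ : Set (Set Y × (Fin n → Set X)))
    (𝒜 : Fin n → Set (Set X)) : Set (Set Y) :=
  {B | ∃ A : Fin n → Set X, (∀ i, A i ∈ 𝒜 i) ∧ (B, A) ∈ ℛ}

section Helpers
variable {X Y : Type*}

def rowSet (x : X) (Y : Type*) : Set (X × Y) := ({x} : Set X) ×ˢ (univ : Set Y)
def colSet (X : Type*) (y : Y) : Set (X × Y) := (univ : Set X) ×ˢ ({y} : Set Y)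

def fatFam (X Y : Type*) : Set (Set (X × Y)) :=
  (fun p : Set X × Set Y => p.1 ×ˢ p.2) '' ({A : Set X | A.Nontrivial} ×ˢ {B : Set Y | B.Nontrivial})

def rowFam (X Y : Type*) : Set (Set (X × Y)) := range (fun x : X => rowSet x Y)
def colFam (X Y : Type*) : Set (Set (X × Y)) := range (fun y : Y => colSet X y)

def mandFam (X Y : Type*) : Set (Set (X × Y)) := (fatFam X Y ∪ rowFam X Y) ∪ colFam X Y

lemma mem_fatFam {R : Set (X × Y)} :
    R ∈ fatFam X Y ↔ ∃ (A : Set X) (B : Set Y), A.Nontrivial ∧ B.Nontrivial ∧ R = A ×ˢ B := by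
  constructor
  · rintro ⟨⟨A, B⟩, ⟨hA, hB⟩, rfl⟩; exact ⟨A, B, hA, hB, rfl⟩
  · rintro ⟨A, B, hA, hB, rfl⟩; exact ⟨⟨A, B⟩, ⟨hA, hB⟩, rfl⟩

lemma fatFam_subset_rect : fatFam X Y ⊆ rectFam X Y := by
  rintro R ⟨⟨A, B⟩, _, rfl⟩; exact ⟨A, B, rfl⟩

lemma rowSet_mem_rect (x : X) : rowSet x Y ∈ rectFam X Y := ⟨{x}, univ, rfl⟩
lemma colSet_mem_rect (y : Y) : colSet X y ∈ rectFam X Y := ⟨univ, {y}, rfl⟩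

lemma mandFam_subset_rect : mandFam X Y ⊆ rectFam X Y := by
  rintro R ((h | ⟨x, rfl⟩) | ⟨y, rfl⟩)
  · exact fatFam_subset_rect h
  · exact rowSet_mem_rect x
  · exact colSet_mem_rect y

lemma rect_of_subset_row {x : X} {C : Set (X × Y)} (h : C ⊆ rowSet x Y) : C ∈ rectFam X Y := by
  refine ⟨Prod.fst '' C, Prod.snd '' C, ?_⟩
  ext ⟨a, b⟩
  constructor
  · intro hab; exact ⟨⟨_, hab, rfl⟩, ⟨_, hab, rfl⟩⟩
  · rintro ⟨⟨q, hq, rfl⟩, ⟨r, hr, rfl⟩⟩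
    have hq1 : q.1 = x := (h hq).1
    have hr1 : r.1 = x := (h hr).1
    have : r = (q.1, r.2) := Prod.ext (by rw [hq1, hr1]) rfl
    rwa [← this]

lemma rect_of_subset_col {y : Y} {C : Set (X × Y)} (h : C ⊆ colSet X y) : C ∈ rectFam X Y := by
  refine ⟨Prod.fst '' C, Prod.snd '' C, ?_⟩
  ext ⟨a, b⟩
  constructor
  · intro hab; exact ⟨⟨_, hab, rfl⟩, ⟨_, hab, rfl⟩⟩
  · rintro ⟨⟨q, hq, rfl⟩, ⟨r, hr, rfl⟩⟩
    have hq2 : q.2 = y := (h hq).2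
    have hr2 : r.2 = y := (h hr).2
    have : q = (q.1, r.2) := Prod.ext rfl (by rw [hq2, hr2])
    rwa [← this]

lemma fat_not_subset_row {R : Set (X × Y)} (hR : R ∈ fatFam X Y) {x : X}
    (h : R ⊆ rowSet x Y) : False := by
  obtain ⟨A, B, hA, hB, rfl⟩ := mem_fatFam.mp hR
  obtain ⟨a1, ha1, a2, ha2, hne⟩ := hA
  obtain ⟨b, hb⟩ := hB.nonempty
  have h1 : a1 = x := (h (show (a1, b) ∈ A ×ˢ B from ⟨ha1, hb⟩)).1
  have h2 : a2 = x := (h (show (a2, b) ∈ A ×ˢ B from ⟨ha2, hb⟩)).1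
  exact hne (h1.trans h2.symm)

lemma fat_not_subset_col {R : Set (X × Y)} (hR : R ∈ fatFam X Y) {y : Y}
    (h : R ⊆ colSet X y) : False := by
  obtain ⟨A, B, hA, hB, rfl⟩ := mem_fatFam.mp hR
  obtain ⟨b1, hb1, b2, hb2, hne⟩ := hB
  obtain ⟨a, ha⟩ := hA.nonempty
  have h1 : b1 = y := (h (show (a, b1) ∈ A ×ˢ B from ⟨ha, hb1⟩)).2
  have h2 : b2 = y := (h (show (a, b2) ∈ A ×ˢ B from ⟨ha, hb2⟩)).2
  exact hne (h1.trans h2.symm)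

lemma empty_not_fat : (∅ : Set (X × Y)) ∉ fatFam X Y := by
  intro h
  obtain ⟨A, B, hA, hB, hE⟩ := mem_fatFam.mp h
  obtain ⟨a, ha⟩ := hA.nonempty
  obtain ⟨b, hb⟩ := hB.nonempty
  have : (a, b) ∈ (∅ : Set (X × Y)) := hE ▸ (⟨ha, hb⟩ : (a, b) ∈ A ×ˢ B)
  exact this


lemma prod_eq_of_nonempty {A A' : Set X} {B B' : Set Y} (hA : A.Nonempty) (hB : B.Nonempty)
    (h : A ×ˢ B = A' ×ˢ B') : A = A' ∧ B = B' := by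
  have hne : (A' ×ˢ B').Nonempty := h ▸ hA.prod hB
  rw [prod_nonempty_iff] at hne
  constructor
  · rw [← fst_image_prod A hB, ← fst_image_prod A' hne.2, h]
  · rw [← snd_image_prod hA B, ← snd_image_prod hne.1 B', h]

lemma fat_insert_not_rect {A : Set X} {B : Set Y} (hA : A.Nontrivial) (hB : B.Nontrivial)
    {p : X × Y} (hp : p ∉ A ×ˢ B) (h : insert p (A ×ˢ B) ∈ rectFam X Y) : False := by
  obtain ⟨A', B', hE⟩ := h
  obtain ⟨b0, hb0⟩ := hB.nonempty
  obtain ⟨a0, ha0⟩ := hA.nonempty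
  have hAsub : ∀ a ∈ A, a ∈ A' := fun a ha =>
    (show (a, b0) ∈ A' ×ˢ B' from hE ▸ mem_insert_of_mem _ ⟨ha, hb0⟩).1
  have hBsub : ∀ b ∈ B, b ∈ B' := fun b hb =>
    (show (a0, b) ∈ A' ×ˢ B' from hE ▸ mem_insert_of_mem _ ⟨ha0, hb⟩).2
  have hpm : p.1 ∈ A' ∧ p.2 ∈ B' := show p ∈ A' ×ˢ B' from hE ▸ mem_insert _ _
  have key2 : ∀ a ∈ A, a ≠ p.1 → p.2 ∈ B := by
    intro a ha hne
    have hm : (a, p.2) ∈ insert p (A ×ˢ B) := by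
      rw [hE]; exact ⟨hAsub a ha, hpm.2⟩
    rcases mem_insert_iff.mp hm with heq | hm
    · exact absurd (congrArg Prod.fst heq) hne
    · exact hm.2
  have key1 : ∀ b ∈ B, b ≠ p.2 → p.1 ∈ A := by
    intro b hb hne
    have hm : (p.1, b) ∈ insert p (A ×ˢ B) := by
      rw [hE]; exact ⟨hpm.1, hBsub b hb⟩
    rcases mem_insert_iff.mp hm with heq | hm
    · exact absurd (congrArg Prod.snd heq) hne
    · exact hm.1
  obtain ⟨a, ha, hane⟩ := hA.exists_ne p.1
  obtain ⟨b, hb, hbne⟩ := hB.exists_ne p.2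
  exact hp ⟨key1 b hb hbne, key2 a ha hane⟩

lemma row_insert_not_rect (hYnt : (univ : Set Y).Nontrivial) {x : X} {p : X × Y}
    (hp : p ∉ rowSet x Y) (h : insert p (rowSet x Y) ∈ rectFam X Y) : False := by
  obtain ⟨A', B', hE⟩ := h
  have hpx : p.1 ≠ x := fun he => hp ⟨he, trivial⟩
  have hrow : ∀ y : Y, x ∈ A' ∧ y ∈ B' :=
    fun y => show (x, y) ∈ A' ×ˢ B' from hE ▸ mem_insert_of_mem _ ⟨rfl, trivial⟩
  have hpm : p.1 ∈ A' ∧ p.2 ∈ B' := show p ∈ A' ×ˢ B' from hE ▸ mem_insert _ _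
  obtain ⟨y, -, hy⟩ := hYnt.exists_ne p.2
  have hm : (p.1, y) ∈ insert p (rowSet x Y) := by
    rw [hE]; exact ⟨hpm.1, (hrow y).2⟩
  rcases mem_insert_iff.mp hm with heq | hm
  · exact hy (congrArg Prod.snd heq)
  · exact hpx hm.1

lemma col_insert_not_rect (hXnt : (univ : Set X).Nontrivial) {y : Y} {p : X × Y}
    (hp : p ∉ colSet X y) (h : insert p (colSet X y) ∈ rectFam X Y) : False := by
  obtain ⟨A', B', hE⟩ := h
  have hpy : p.2 ≠ y := fun he => hp ⟨trivial, he⟩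
  have hcol : ∀ x : X, x ∈ A' ∧ y ∈ B' :=
    fun x => show (x, y) ∈ A' ×ˢ B' from hE ▸ mem_insert_of_mem _ ⟨trivial, rfl⟩
  have hpm : p.1 ∈ A' ∧ p.2 ∈ B' := show p ∈ A' ×ˢ B' from hE ▸ mem_insert _ _
  obtain ⟨x, -, hx⟩ := hXnt.exists_ne p.1
  have hm : (x, p.2) ∈ insert p (colSet X y) := by
    rw [hE]; exact ⟨(hcol x).1, hpm.2⟩
  rcases mem_insert_iff.mp hm with heq | hm
  · exact hx (congrArg Prod.fst heq)
  · exact hpy hm.2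

lemma fat_erase_not_rect {A : Set X} {B : Set Y} (hA : A.Nontrivial) (hB : B.Nontrivial)
    {p : X × Y} (hp : p ∈ A ×ˢ B) (h : A ×ˢ B \ {p} ∈ rectFam X Y) : False := by
  obtain ⟨A', B', hE⟩ := h
  obtain ⟨a, ha, hane⟩ := hA.exists_ne p.1
  obtain ⟨b, hb, hbne⟩ := hB.exists_ne p.2
  have h1 : (a, p.2) ∈ A' ×ˢ B' := by
    rw [← hE]
    exact ⟨⟨ha, hp.2⟩, fun he => hane (congrArg Prod.fst he)⟩
  have h2 : (p.1, b) ∈ A' ×ˢ B' := by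
    rw [← hE]
    exact ⟨⟨hp.1, hb⟩, fun he => hbne (congrArg Prod.snd he)⟩
  have h3 : p ∈ A ×ˢ B \ {p} := by
    rw [hE]; exact ⟨h2.1, h1.2⟩
  exact h3.2 rfl

lemma no_extend (hXnt : (univ : Set X).Nontrivial) (hYnt : (univ : Set Y).Nontrivial)
    {R G : Set (X × Y)} (hR : R ∈ mandFam X Y) (hsub : R ⊆ G)
    (h : ∀ C, R ⊆ C → C ⊆ G → C ∈ rectFam X Y) : G = R := by
  by_contra hne
  obtain ⟨p, hpG, hpR⟩ := exists_of_ssubset ⟨hsub, fun h' => hne (subset_antisymm h' hsub)⟩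
  have hC := h (insert p R) (subset_insert p R) (insert_subset hpG hsub)
  rcases hR with (hfat | ⟨x, rfl⟩) | ⟨y, rfl⟩
  · obtain ⟨A, B, hA, hB, rfl⟩ := mem_fatFam.mp hfat
    exact fat_insert_not_rect hA hB hpR hC
  · exact row_insert_not_rect hYnt hpR hC
  · exact col_insert_not_rect hXnt hpR hC

lemma no_shrink {R K : Set (X × Y)} (hfat : R ∈ fatFam X Y) (hsub : K ⊆ R)
    (h : ∀ C, K ⊆ C → C ⊆ R → C ∈ rectFam X Y) : K = R := by
  by_contra hne
  obtain ⟨p, hpR, hpK⟩ := exists_of_ssubset ⟨hsub, fun h' => hne (subset_antisymm hsub h')⟩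
  have hC := h (R \ {p}) (fun q hq => ⟨hsub hq, fun he => hpK (he ▸ hq)⟩) diff_subset
  obtain ⟨A, B, hA, hB, rfl⟩ := mem_fatFam.mp hfat
  exact fat_erase_not_rect hA hB hpR hC

lemma rect_cases (x0 : X) {P : Set (X × Y)} (hP : P ∈ rectFam X Y) :
    P ∈ fatFam X Y ∨ (∃ x, P ⊆ rowSet x Y) ∨ (∃ y, P ⊆ colSet X y) := by
  obtain ⟨A, B, rfl⟩ := hP
  by_cases hA : A.Nontrivial
  · by_cases hB : B.Nontrivial
    · exact Or.inl (mem_fatFam.mpr ⟨A, B, hA, hB, rfl⟩)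
    · rcases (not_nontrivial_iff.mp hB).eq_empty_or_singleton with rfl | ⟨y, rfl⟩
      · exact Or.inr (Or.inl ⟨x0, by simp [rowSet]⟩)
      · exact Or.inr (Or.inr ⟨y, prod_mono (subset_univ A) subset_rfl⟩)
  · rcases (not_nontrivial_iff.mp hA).eq_empty_or_singleton with rfl | ⟨x, rfl⟩
    · exact Or.inr (Or.inl ⟨x0, by simp [rowSet]⟩)
    · exact Or.inr (Or.inl ⟨x, prod_mono subset_rfl (subset_univ B)⟩)


lemma sUnion_Icc_empty {α : Type*} (R : Set α) : ⋃₀ (Icc (∅ : Set α) R) = R :=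
  subset_antisymm (sUnion_subset fun _ hC => hC.2)
    (subset_sUnion_of_mem ⟨empty_subset R, subset_rfl⟩)

lemma myEncardProd {α β : Type*} (s : Set α) (t : Set β) :
    (s ×ˢ t).encard = s.encard * t.encard := by
  simp only [Set.encard, ENat.card]
  rw [Cardinal.mk_congr (Equiv.Set.prod s t), Cardinal.mk_prod, map_mul]
  simp [Cardinal.toENat_lift]

lemma encard_nontrivial_sets (α : Type*) [Fintype α] :
    {A : Set α | A.Nontrivial}.encard
      = ((2 ^ Fintype.card α - Fintype.card α - 1 : ℕ) : ℕ∞) := by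
  classical
  have hsmall : {A : Set α | ¬ A.Nontrivial} = insert ∅ (range (fun a : α => ({a} : Set α))) := by
    ext A
    simp only [mem_setOf_eq, not_nontrivial_iff, mem_insert_iff, mem_range]
    constructor
    · intro h
      rcases h.eq_empty_or_singleton with h | ⟨a, rfl⟩
      · exact Or.inl h
      · exact Or.inr ⟨a, rfl⟩
    · rintro (rfl | ⟨a, rfl⟩)
      · exact subsingleton_empty
      · exact subsingleton_singleton
  have hrange : (range (fun a : α => ({a} : Set α))).encard = (Fintype.card α : ℕ∞) := by
    rw [← image_univ, (Set.singleton_injective.injOn).encard_image, encard_univ,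
      ENat.card_eq_coe_fintype_card]
  have hne : (∅ : Set α) ∉ range (fun a : α => ({a} : Set α)) := by
    rintro ⟨a, ha⟩
    exact (singleton_ne_empty a) ha
  have hsc : {A : Set α | ¬ A.Nontrivial}.encard = (Fintype.card α : ℕ∞) + 1 := by
    rw [hsmall, encard_insert_of_notMem hne, hrange]
  have hdiff : {A : Set α | A.Nontrivial} = univ \ {A : Set α | ¬ A.Nontrivial} := by
    ext A; simp
  have huniv : (univ : Set (Set α)).encard = ((2 ^ Fintype.card α : ℕ) : ℕ∞) := by
    rw [encard_univ, ENat.card_eq_coe_fintype_card, Fintype.card_set]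
  have hkey := encard_diff_add_encard_of_subset (subset_univ {A : Set α | ¬ A.Nontrivial})
  rw [huniv, hsc, ← hdiff] at hkey
  have h2 : {A : Set α | A.Nontrivial}.encard + ((Fintype.card α + 1 : ℕ) : ℕ∞)
      = ((2 ^ Fintype.card α : ℕ) : ℕ∞) := by
    rw [Nat.cast_add, Nat.cast_one]
    exact hkey
  have hlt := Nat.lt_two_pow_self (n := Fintype.card α)
  have h3 : ((2 ^ Fintype.card α - Fintype.card α - 1 : ℕ) : ℕ∞)
      + ((Fintype.card α + 1 : ℕ) : ℕ∞) = ((2 ^ Fintype.card α : ℕ) : ℕ∞) := by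
    rw [← Nat.cast_add]
    congr 1
    omega
  exact WithTop.add_right_cancel (ENat.coe_ne_top _) (h2.trans h3.symm)

lemma encard_fatFam (X Y : Type*) [Fintype X] [Fintype Y] :
    (fatFam X Y).encard = (((2 ^ Fintype.card X - Fintype.card X - 1)
      * (2 ^ Fintype.card Y - Fintype.card Y - 1) : ℕ) : ℕ∞) := by
  have hinj : InjOn (fun p : Set X × Set Y => p.1 ×ˢ p.2)
      ({A : Set X | A.Nontrivial} ×ˢ {B : Set Y | B.Nontrivial}) := by
    rintro ⟨A, B⟩ ⟨hA, hB⟩ ⟨A', B'⟩ ⟨hA', hB'⟩ h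
    obtain ⟨h1, h2⟩ := prod_eq_of_nonempty hA.nonempty hB.nonempty h
    exact Prod.ext h1 h2
  rw [fatFam, hinj.encard_image, myEncardProd, encard_nontrivial_sets, encard_nontrivial_sets,
    ← Nat.cast_mul]

lemma encard_rowFam (X Y : Type*) [Fintype X] [Nonempty Y] :
    (rowFam X Y).encard = (Fintype.card X : ℕ∞) := by
  rw [rowFam, ← image_univ]
  have hinj : InjOn (fun x : X => rowSet x Y) univ := by
    intro x _ x' _ h
    obtain ⟨y⟩ := (inferInstance : Nonempty Y)
    have h' : rowSet x Y = rowSet x' Y := h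
    have : (x, y) ∈ rowSet x' Y := h' ▸ (⟨rfl, trivial⟩ : (x, y) ∈ rowSet x Y)
    exact this.1
  rw [hinj.encard_image, encard_univ, ENat.card_eq_coe_fintype_card]

lemma encard_colFam (X Y : Type*) [Fintype Y] [Nonempty X] :
    (colFam X Y).encard = (Fintype.card Y : ℕ∞) := by
  rw [colFam, ← image_univ]
  have hinj : InjOn (fun y : Y => colSet X y) univ := by
    intro y _ y' _ h
    obtain ⟨x⟩ := (inferInstance : Nonempty X)
    have h' : colSet X y = colSet X y' := h
    have : (x, y) ∈ colSet X y' := h' ▸ (⟨trivial, rfl⟩ : (x, y) ∈ colSet X y)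
    exact this.2
  rw [hinj.encard_image, encard_univ, ENat.card_eq_coe_fintype_card]

lemma row_ne_col (hXnt : (univ : Set X).Nontrivial) (x : X) (y : Y) :
    rowSet x Y ≠ colSet X y := by
  intro h
  obtain ⟨x', -, hx'⟩ := hXnt.exists_ne x
  have : (x', y) ∈ rowSet x Y := h ▸ (⟨trivial, rfl⟩ : (x', y) ∈ colSet X y)
  exact hx' this.1

lemma encard_mandFam (X Y : Type*) [Fintype X] [Fintype Y]
    (hXnt : (univ : Set X).Nontrivial) (hYnt : (univ : Set Y).Nontrivial) :
    (mandFam X Y).encard = (((2 ^ Fintype.card X - Fintype.card X - 1)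
      * (2 ^ Fintype.card Y - Fintype.card Y - 1)
      + Fintype.card X + Fintype.card Y : ℕ) : ℕ∞) := by
  have : Nonempty X := ⟨hXnt.nonempty.choose⟩
  have : Nonempty Y := ⟨hYnt.nonempty.choose⟩
  have d1 : Disjoint (fatFam X Y) (rowFam X Y) := by
    rw [disjoint_left]
    rintro R hR ⟨x, rfl⟩
    exact fat_not_subset_row hR subset_rfl
  have d2 : Disjoint (fatFam X Y ∪ rowFam X Y) (colFam X Y) := by
    rw [disjoint_left]
    rintro R hRu ⟨y, rfl⟩
    rcases hRu with hR | ⟨x, hx⟩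
    · exact fat_not_subset_col hR subset_rfl
    · exact row_ne_col hXnt x y hx
  rw [mandFam, encard_union_eq d2, encard_union_eq d1, encard_fatFam, encard_rowFam,
    encard_colFam, ← Nat.cast_add, ← Nat.cast_add]


open Classical in
noncomputable def domD (X Y : Type*) : Set (X × Y) → Set (Set (X × Y)) :=
  fun G => if G ∈ fatFam X Y then {G} else Icc ∅ G

open Classical in
noncomputable def supS (X Y : Type*) : Set (X × Y) → Set (Set (X × Y)) :=
  fun K => if K = ∅ then rectFam X Y \ fatFam X Y else {K}

lemma domD_spec {G : Set (X × Y)} (hG : G ∈ mandFam X Y) :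
    domD X Y G ⊆ rectFam X Y ∧ IsConvexFam (domD X Y G) ∧ IsDominatedFam (domD X Y G) ∧
      ⋃₀ (domD X Y G) = G := by
  by_cases hf : G ∈ fatFam X Y
  · rw [domD, if_pos hf]
    refine ⟨?_, ?_, ?_, sUnion_singleton G⟩
    · intro C hC
      rw [mem_singleton_iff] at hC
      subst hC
      exact fatFam_subset_rect hf
    · intro S hS T hT C h1 h2
      rw [mem_singleton_iff] at hS hT ⊢
      subst hS; subst hT
      exact subset_antisymm h2 h1
    · show IsDominatedFam ({G} : Set (Set (X × Y)))
      unfold IsDominatedFam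
      rw [sUnion_singleton]
      exact rfl
  · have hrc : (∃ x, G ⊆ rowSet x Y) ∨ (∃ y, G ⊆ colSet X y) := by
      rcases hG with (h | ⟨x, hx⟩) | ⟨y, hy⟩
      · exact absurd h hf
      · exact Or.inl ⟨x, hx ▸ subset_rfl⟩
      · exact Or.inr ⟨y, hy ▸ subset_rfl⟩
    rw [domD, if_neg hf]
    refine ⟨?_, ?_, ?_, sUnion_Icc_empty G⟩
    · intro C hC
      rcases hrc with ⟨x, hx⟩ | ⟨y, hy⟩
      · exact rect_of_subset_row (hC.2.trans hx)
      · exact rect_of_subset_col (hC.2.trans hy)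
    · intro S hS T hT C h1 h2
      exact ⟨empty_subset C, h2.trans hT.2⟩
    · show IsDominatedFam (Icc (∅ : Set (X × Y)) G)
      unfold IsDominatedFam
      rw [sUnion_Icc_empty]
      exact ⟨empty_subset G, subset_rfl⟩

lemma domD_cover (x0 : X) {P : Set (X × Y)} (hP : P ∈ rectFam X Y) :
    ∃ G ∈ mandFam X Y, P ∈ domD X Y G := by
  rcases rect_cases x0 hP with hfat | ⟨x, hx⟩ | ⟨y, hy⟩
  · exact ⟨P, Or.inl (Or.inl hfat), by rw [domD, if_pos hfat]; exact rfl⟩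
  · refine ⟨rowSet x Y, Or.inl (Or.inr ⟨x, rfl⟩), ?_⟩
    rw [domD, if_neg (fun hf => fat_not_subset_row hf subset_rfl)]
    exact ⟨empty_subset P, hx⟩
  · refine ⟨colSet X y, Or.inr ⟨y, rfl⟩, ?_⟩
    rw [domD, if_neg (fun hf => fat_not_subset_col hf subset_rfl)]
    exact ⟨empty_subset P, hy⟩

lemma dominates_mand (x0 : X) : DominatesFam (mandFam X Y) (rectFam X Y) := by
  refine ⟨mandFam_subset_rect, domD X Y, fun G hG => domD_spec hG, ?_⟩
  apply subset_antisymm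
  · exact iUnion₂_subset fun G hG => (domD_spec hG).1
  · intro P hP
    obtain ⟨G, hG, hmem⟩ := domD_cover x0 hP
    exact mem_iUnion₂.mpr ⟨G, hG, hmem⟩

lemma mand_subset_of_dominates (hXnt : (univ : Set X).Nontrivial)
    (hYnt : (univ : Set Y).Nontrivial) {𝒢 : Set (Set (X × Y))}
    (h : DominatesFam 𝒢 (rectFam X Y)) : mandFam X Y ⊆ 𝒢 := by
  obtain ⟨hsub, 𝒟, hspec, hcov⟩ := h
  intro R hR
  have hRrect : R ∈ rectFam X Y := mandFam_subset_rect hR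
  rw [← hcov] at hRrect
  obtain ⟨G, hG, hmem⟩ := mem_iUnion₂.mp hRrect
  obtain ⟨hDsub, hconv, hdom, hsup⟩ := hspec G hG
  have hGmem : G ∈ 𝒟 G := by
    have h' : ⋃₀ (𝒟 G) ∈ 𝒟 G := hdom
    rwa [hsup] at h'
  have hRG : R ⊆ G := hsup ▸ subset_sUnion_of_mem hmem
  have hGR : G = R :=
    no_extend hXnt hYnt hR hRG (fun C h1 h2 => hDsub (hconv R hmem G hGmem C h1 h2))
  rwa [← hGR]

lemma sUnion_domD {G : Set (X × Y)} : ⋃₀ (domD X Y G) = G := by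
  rw [domD]
  split
  · exact sUnion_singleton G
  · exact sUnion_Icc_empty G

lemma domD_injOn : InjOn (domD X Y) (mandFam X Y) := by
  intro G _ G' _ h
  rw [← sUnion_domD (G := G), ← sUnion_domD (G := G'), h]

lemma domD_interval {G : Set (X × Y)} : IsIntervalFam (domD X Y G) := by
  rw [domD]
  split
  · exact ⟨G, G, subset_rfl, (Icc_self G).symm⟩
  · exact ⟨∅, G, empty_subset G, rfl⟩

lemma mand_subset_sUnion_image (hXnt : (univ : Set X).Nontrivial)
    (hYnt : (univ : Set Y).Nontrivial) {𝕀 : Set (Set (Set (X × Y)))}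
    (hint : ∀ J ∈ 𝕀, IsIntervalFam J) (hcov : ⋃₀ 𝕀 = rectFam X Y) :
    mandFam X Y ⊆ (fun J => ⋃₀ J) '' 𝕀 := by
  intro R hR
  have hRrect : R ∈ rectFam X Y := mandFam_subset_rect hR
  rw [← hcov] at hRrect
  obtain ⟨J, hJ, hmem⟩ := hRrect
  obtain ⟨A, B, hAB, rfl⟩ := hint J hJ
  have hJrect : Icc A B ⊆ rectFam X Y := fun C hC => hcov ▸ ⟨Icc A B, hJ, hC⟩
  have hBR : B = R :=
    no_extend hXnt hYnt hR hmem.2 (fun C h1 h2 => hJrect ⟨hmem.1.trans h1, h2⟩)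
  refine ⟨Icc A B, hJ, ?_⟩
  show ⋃₀ (Icc A B) = R
  have : ⋃₀ (Icc A B) = B :=
    subset_antisymm (sUnion_subset fun C hC => hC.2) (subset_sUnion_of_mem ⟨hAB, subset_rfl⟩)
  rw [this, hBR]

lemma supS_spec {K : Set (X × Y)} (x0 : X) (hK : K ∈ insert ∅ (fatFam X Y)) :
    supS X Y K ⊆ rectFam X Y ∧ IsConvexFam (supS X Y K) ∧ IsSupportedFam (supS X Y K) ∧
      ⋂₀ (supS X Y K) = K := by
  have hempty : (∅ : Set (X × Y)) ∈ rectFam X Y \ fatFam X Y :=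
    ⟨⟨∅, ∅, by simp⟩, empty_not_fat⟩
  rcases mem_insert_iff.mp hK with rfl | hfat
  · rw [supS, if_pos rfl]
    have hint : ⋂₀ (rectFam X Y \ fatFam X Y) = (∅ : Set (X × Y)) :=
      subset_empty_iff.mp (sInter_subset_of_mem hempty)
    refine ⟨fun C hC => hC.1, ?_, ⟨⟨∅, hempty⟩, by rw [hint]; exact hempty⟩, hint⟩
    intro S hS T hT C h1 h2
    rcases rect_cases x0 hT.1 with hf | ⟨x, hx⟩ | ⟨y, hy⟩
    · exact absurd hf hT.2
    · exact ⟨rect_of_subset_row (h2.trans hx), fun hf => fat_not_subset_row hf (h2.trans hx)⟩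
    · exact ⟨rect_of_subset_col (h2.trans hy), fun hf => fat_not_subset_col hf (h2.trans hy)⟩
  · have hne : K ≠ ∅ := fun he => empty_not_fat (he ▸ hfat)
    rw [supS, if_neg hne]
    refine ⟨?_, ?_, ⟨⟨K, rfl⟩, ?_⟩, sInter_singleton K⟩
    · intro C hC
      rw [mem_singleton_iff] at hC
      subst hC
      exact fatFam_subset_rect hfat
    · intro S hS T hT C h1 h2
      rw [mem_singleton_iff] at hS hT ⊢
      subst hS; subst hT
      exact subset_antisymm h2 h1
    · show ⋂₀ ({K} : Set (Set (X × Y))) ∈ ({K} : Set (Set (X × Y)))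
      rw [sInter_singleton]
      exact rfl

lemma supports_dual (x0 : X) : SupportsFam (insert ∅ (fatFam X Y)) (rectFam X Y) := by
  constructor
  · rintro K (rfl | hfat)
    · exact ⟨∅, ∅, by simp⟩
    · exact fatFam_subset_rect hfat
  refine ⟨supS X Y, fun K hK => supS_spec x0 hK, ?_⟩
  apply subset_antisymm
  · exact iUnion₂_subset fun K hK => (supS_spec x0 hK).1
  · intro P hP
    by_cases hf : P ∈ fatFam X Y
    · refine mem_iUnion₂.mpr ⟨P, Or.inr hf, ?_⟩
      rw [supS, if_neg (fun he => empty_not_fat (he ▸ hf))]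
      exact rfl
    · refine mem_iUnion₂.mpr ⟨∅, Or.inl rfl, ?_⟩
      rw [supS, if_pos rfl]
      exact ⟨hP, hf⟩

lemma dual_subset_of_supports {𝒦 : Set (Set (X × Y))}
    (h : SupportsFam 𝒦 (rectFam X Y)) : insert ∅ (fatFam X Y) ⊆ 𝒦 := by
  obtain ⟨hsub, 𝒮, hspec, hcov⟩ := h
  rintro R (rfl | hfat)
  · have hmem : (∅ : Set (X × Y)) ∈ ⋃ K ∈ 𝒦, 𝒮 K := by
      rw [hcov]; exact ⟨∅, ∅, by simp⟩
    obtain ⟨K, hK, hm⟩ := mem_iUnion₂.mp hmem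
    obtain ⟨-, -, -, hinf⟩ := hspec K hK
    have : K = ∅ := subset_empty_iff.mp (hinf ▸ sInter_subset_of_mem hm)
    rwa [← this]
  · have hmem : R ∈ ⋃ K ∈ 𝒦, 𝒮 K := by
      rw [hcov]; exact fatFam_subset_rect hfat
    obtain ⟨K, hK, hm⟩ := mem_iUnion₂.mp hmem
    obtain ⟨hSsub, hconv, hsupp, hinf⟩ := hspec K hK
    have hKmem : K ∈ 𝒮 K := by
      have h' : ⋂₀ (𝒮 K) ∈ 𝒮 K := hsupp.2
      rwa [hinf] at h'
    have hKR : K ⊆ R := hinf ▸ sInter_subset_of_mem hm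
    have : K = R :=
      no_shrink hfat hKR (fun C h1 h2 => hSsub (hconv K hKmem R hm C h1 h2))
    rwa [← this]


end Helpers


theorem stmt16 {X Y : Type*} [Fintype X] [Fintype Y]
    (hX : 2 ≤ Fintype.card X) (hY : 2 ≤ Fintype.card Y) :
    upperDim (rectFam X Y) =
      (((2 ^ Fintype.card X - Fintype.card X - 1) * (2 ^ Fintype.card Y - Fintype.card Y - 1)
        + Fintype.card X + Fintype.card Y : ℕ) : ℕ∞) ∧
    cylDim (rectFam X Y) =
      (((2 ^ Fintype.card X - Fintype.card X - 1) * (2 ^ Fintype.card Y - Fintype.card Y - 1)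
        + Fintype.card X + Fintype.card Y : ℕ) : ℕ∞) ∧
    dualDim (rectFam X Y) =
      (((2 ^ Fintype.card X - Fintype.card X - 1) * (2 ^ Fintype.card Y - Fintype.card Y - 1)
        + 1 : ℕ) : ℕ∞) := by
  classical
  have hXt : Nontrivial X := Fintype.one_lt_card_iff_nontrivial.mp (by omega)
  have hYt : Nontrivial Y := Fintype.one_lt_card_iff_nontrivial.mp (by omega)
  have hXnt : (univ : Set X).Nontrivial := nontrivial_univ
  have hYnt : (univ : Set Y).Nontrivial := nontrivial_univ
  obtain ⟨x0⟩ := (inferInstance : Nonempty X)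
  have hmcard := encard_mandFam X Y hXnt hYnt
  have hfcard := encard_fatFam X Y
  refine ⟨?_, ?_, ?_⟩
  · apply le_antisymm
    · exact sInf_le ⟨mandFam X Y, dominates_mand x0, hmcard⟩
    · refine le_sInf ?_
      rintro b ⟨𝒢, hdom, rfl⟩
      rw [← hmcard]
      exact encard_mono (mand_subset_of_dominates hXnt hYnt hdom)
  · apply le_antisymm
    · refine sInf_le ⟨domD X Y '' mandFam X Y, ?_, ?_, ?_⟩
      · rintro J ⟨G, hG, rfl⟩
        exact domD_interval
      · apply subset_antisymm
        · intro C hC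
          obtain ⟨J, ⟨G, hG, rfl⟩, hCJ⟩ := hC
          exact (domD_spec hG).1 hCJ
        · intro P hP
          obtain ⟨G, hG, hmem⟩ := domD_cover x0 hP
          exact ⟨domD X Y G, ⟨G, hG, rfl⟩, hmem⟩
      · rw [domD_injOn.encard_image, hmcard]
    · refine le_sInf ?_
      rintro b ⟨𝕀, hint, hcov, rfl⟩
      refine le_trans (le_of_eq hmcard.symm) ?_
      exact le_trans (encard_mono (mand_subset_sUnion_image hXnt hYnt hint hcov))
        (encard_image_le _ _)
  · have hdcard : (insert ∅ (fatFam X Y)).encard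
        = (((2 ^ Fintype.card X - Fintype.card X - 1)
          * (2 ^ Fintype.card Y - Fintype.card Y - 1) + 1 : ℕ) : ℕ∞) := by
      rw [encard_insert_of_notMem empty_not_fat, hfcard]
      norm_cast
    apply le_antisymm
    · exact sInf_le ⟨insert ∅ (fatFam X Y), supports_dual x0, hdcard⟩
    · refine le_sInf ?_
      rintro b ⟨𝒦, hsupp, rfl⟩
      rw [← hdcard]
      exact encard_mono (dual_subset_of_supports hsupp)
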